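/- Let λ : [0,∞) → [0,∞) be a decreasing function with ∫₀^∞ √(λ(t)) dt < ∞. Then the function t ↦ t·λ(t) is integrable on [0,∞). -/

import Mathlib

open MeasureTheory Set

theorem integrable_t_mul_lambda
    (lam : ℝ → ℝ)
    (hnonneg : ∀ t, 0 ≤ t → 0 ≤ lam t)
    (hmono : AntitoneOn lam (Set.Ici (0:ℝ)))
    (hint : MeasureTheory.IntegrableOn (fun t => Real.sqrt (lam t)) (Set.Ici (0:ℝ))) :
    MeasureTheory.IntegrableOn (fun t => t * lam t) (Set.Ici (0:ℝ)) := by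
  set C := ∫ t in Set.Ici (0:ℝ), Real.sqrt (lam t) with hCdef
  have key : ∀ t, 0 ≤ t → t * Real.sqrt (lam t) ≤ C := by
    intro t ht
    have h1 : t * Real.sqrt (lam t) = ∫ _ in Set.Ioc (0:ℝ) t, Real.sqrt (lam t) := by
      rw [MeasureTheory.setIntegral_const, Real.volume_real_Ioc_of_le ht, smul_eq_mul]
      ring
    have hIoc : Set.Ioc (0:ℝ) t ⊆ Set.Ici (0:ℝ) := fun s hs => le_of_lt hs.1
    have h2 : (∫ _ in Set.Ioc (0:ℝ) t, Real.sqrt (lam t))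
        ≤ ∫ s in Set.Ioc (0:ℝ) t, Real.sqrt (lam s) := by
      apply MeasureTheory.setIntegral_mono_on
      · exact MeasureTheory.integrableOn_const (by simp [Real.volume_Ioc])
      · exact hint.mono_set hIoc
      · exact measurableSet_Ioc
      · intro s hs
        exact Real.sqrt_le_sqrt (hmono (hIoc hs) ht hs.2)
    have h3 : (∫ s in Set.Ioc (0:ℝ) t, Real.sqrt (lam s)) ≤ C := by
      apply MeasureTheory.setIntegral_mono_set hint
      · filter_upwards [MeasureTheory.ae_restrict_mem measurableSet_Ici] with s hs
        exact Real.sqrt_nonneg _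
      · exact HasSubset.Subset.eventuallyLE hIoc
    linarith
  -- measurability
  have hlam_ae : AEMeasurable lam ((volume : Measure ℝ).restrict (Set.Ici 0)) :=
    aemeasurable_restrict_of_antitoneOn measurableSet_Ici hmono
  have hmeas : MeasureTheory.AEStronglyMeasurable (fun t => t * lam t)
      ((volume : Measure ℝ).restrict (Set.Ici 0)) :=
    (aemeasurable_id.mul hlam_ae).aestronglyMeasurable
  have hg : MeasureTheory.IntegrableOn (fun t => C * Real.sqrt (lam t)) (Set.Ici (0:ℝ)) :=
    hint.const_mul C
  apply MeasureTheory.Integrable.mono hg hmeas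
  filter_upwards [MeasureTheory.ae_restrict_mem measurableSet_Ici] with t ht
  have ht0 : (0:ℝ) ≤ t := ht
  have hl := hnonneg t ht0
  have heq : t * lam t = (t * Real.sqrt (lam t)) * Real.sqrt (lam t) := by
    rw [mul_assoc, Real.mul_self_sqrt hl]
  have hC0 : 0 ≤ C :=
    MeasureTheory.setIntegral_nonneg measurableSet_Ici (fun s _ => Real.sqrt_nonneg _)
  rw [Real.norm_eq_abs, Real.norm_eq_abs, abs_of_nonneg (mul_nonneg ht0 hl),
    abs_of_nonneg (mul_nonneg hC0 (Real.sqrt_nonneg _)), heq]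
  exact mul_le_mul_of_nonneg_right (key t ht0) (Real.sqrt_nonneg _)
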